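/- Let P, Q₁, Q₂ ∈ ℂ[z] with |P|² + |Q₁|² = 1 = |P|² + |Q₂|² on 𝕋, and suppose Q₁ and Q₂ both have no roots in the open unit disk 𝔻 and are not identically zero. Then there exists λ ∈ ℂ with |λ| = 1 such that Q₂ = λ·Q₁. -/

import Mathlib

open Complex Polynomial

noncomputable def qstar (p : Polynomial ℂ) : Polynomial ℂ :=
  (p.map (starRingEnd ℂ)).reverse

lemma eval_reverse' (p : Polynomial ℂ) {z : ℂ} (hz : z ≠ 0) :
    p.reverse.eval z = z ^ p.natDegree * p.eval z⁻¹ := by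
  haveI : Invertible (z⁻¹ : ℂ) := invertibleOfNonzero (inv_ne_zero hz)
  have h := Polynomial.eval₂_reverse_mul_pow (RingHom.id ℂ) (z⁻¹) p
  rw [invOf_eq_inv, inv_inv] at h
  rw [← Polynomial.eval_map, ← Polynomial.eval_map, Polynomial.map_id, Polynomial.map_id] at h
  have hzn : (z⁻¹ : ℂ) ^ p.natDegree ≠ 0 := pow_ne_zero _ (inv_ne_zero hz)
  field_simp at h ⊢
  rw [← h, one_div, inv_pow, mul_assoc, inv_mul_cancel₀ (pow_ne_zero _ hz), mul_one]

lemma eval_map_conj (p : Polynomial ℂ) (w : ℂ) :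
    (p.map (starRingEnd ℂ)).eval w = (starRingEnd ℂ) (p.eval ((starRingEnd ℂ) w)) := by
  rw [Polynomial.eval_map]
  conv_lhs => rw [show w = (starRingEnd ℂ) ((starRingEnd ℂ) w) by simp]
  exact Polynomial.eval₂_at_apply _ _

lemma natDegree_map_conj (p : Polynomial ℂ) :
    (p.map (starRingEnd ℂ)).natDegree = p.natDegree :=
  Polynomial.natDegree_map_eq_of_injective (RingHom.injective _) p

lemma qstar_ne_zero {p : Polynomial ℂ} (hp : p ≠ 0) : qstar p ≠ 0 := by
  intro h
  rw [qstar, Polynomial.reverse_eq_zero] at h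
  exact hp ((Polynomial.map_eq_zero_iff (starRingEnd ℂ).injective).mp h)

lemma eval_qstar (p : Polynomial ℂ) {z : ℂ} (hz : z ≠ 0) :
    (qstar p).eval z = z ^ p.natDegree * (starRingEnd ℂ) (p.eval ((starRingEnd ℂ) z⁻¹)) := by
  rw [qstar, eval_reverse' _ hz, natDegree_map_conj, eval_map_conj]

lemma qstar_mul (p q : Polynomial ℂ) : qstar (p * q) = qstar p * qstar q := by
  rw [qstar, Polynomial.map_mul, Polynomial.reverse_mul_of_domain]
  rfl

lemma qstar_one : qstar 1 = 1 := by
  simp [qstar, Polynomial.reverse]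

lemma qstar_pow (p : Polynomial ℂ) (n : ℕ) : qstar (p ^ n) = (qstar p) ^ n := by
  induction n with
  | zero => simpa using qstar_one
  | succ k ih => rw [pow_succ, qstar_mul, ih, pow_succ]

lemma qstar_X_sub_C {α : ℂ} (hα : ‖α‖ = 1) :
    qstar (X - C α) = C (-(starRingEnd ℂ) α) * (X - C α) := by
  have hα0 : α ≠ 0 := by
    intro h; rw [h] at hα; simp at hα
  have h1 : ((X - C α : Polynomial ℂ).map (starRingEnd ℂ)) = X - C ((starRingEnd ℂ) α) := by
    simp
  have hdeg : (X - C ((starRingEnd ℂ) α) : Polynomial ℂ).natDegree = 1 :=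
    Polynomial.natDegree_X_sub_C _
  rw [qstar, h1, Polynomial.reverse, hdeg]
  have h2 : Polynomial.reflect 1 (X - C ((starRingEnd ℂ) α) : Polynomial ℂ)
      = 1 - C ((starRingEnd ℂ) α) * X := by
    rw [Polynomial.reflect_sub]
    have hX : Polynomial.reflect 1 (X : Polynomial ℂ) = 1 := by
      have := Polynomial.reflect_monomial (R := ℂ) 1 1
      simpa using this
    rw [hX, Polynomial.reflect_C]
    ring
  rw [h2]
  have hcc : (starRingEnd ℂ) α * α = 1 := by
    rw [mul_comm, Complex.mul_conj]
    norm_cast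
    rw [← Complex.sq_norm, hα]; norm_num
  rw [Polynomial.C_neg, neg_mul, mul_sub, ← Polynomial.C_mul, hcc, Polynomial.C_1]
  ring


lemma conj_mul_self_one {z : ℂ} (hz : ‖z‖ = 1) : (starRingEnd ℂ) z * z = 1 := by
  rw [mul_comm, Complex.mul_conj]
  norm_cast
  rw [← Complex.sq_norm, hz]; norm_num

lemma conj_inv_eq {z : ℂ} (hz : ‖z‖ = 1) : (starRingEnd ℂ) z⁻¹ = z := by
  rw [map_inv₀, eq_inv_of_mul_eq_one_left (conj_mul_self_one hz), inv_inv]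

lemma circle_infinite : {z : ℂ | ‖z‖ = 1}.Infinite := by
  have hinj : Set.InjOn (fun t : ℝ => Complex.exp (t * Complex.I)) (Set.Ioo 0 1) := by
    intro s hs t ht h
    simp only at h
    rw [Complex.exp_eq_exp_iff_exists_int] at h
    obtain ⟨n, hn⟩ := h
    have h2 : (s : ℂ) * Complex.I = ((t : ℂ) + (n : ℂ) * (2 * (Real.pi : ℂ))) * Complex.I := by
      rw [hn]; push_cast; ring
    have h3 : (s : ℂ) = (t : ℂ) + (n : ℂ) * (2 * (Real.pi : ℂ)) :=
      mul_right_cancel₀ Complex.I_ne_zero h2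
    have h4 : s = t + (n : ℝ) * (2 * Real.pi) := by exact_mod_cast h3
    have hn0 : n = 0 := by
      by_contra hne
      have h6 : s - t = (n : ℝ) * (2 * Real.pi) := by rw [h4]; ring
      have hπ : (3 : ℝ) < Real.pi := Real.pi_gt_three
      rcases lt_or_gt_of_ne hne with hl | hl
      · have hc : (n : ℝ) ≤ -1 := by exact_mod_cast (by omega : n ≤ -1)
        nlinarith [hs.1, hs.2, ht.1, ht.2]
      · have hc : (1 : ℝ) ≤ (n : ℝ) := by exact_mod_cast (by omega : 1 ≤ n)
        nlinarith [hs.1, hs.2, ht.1, ht.2]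
    rw [hn0] at h4
    simpa using h4
  have himg : ((fun t : ℝ => Complex.exp (t * Complex.I)) '' Set.Ioo 0 1).Infinite :=
    (Set.Ioo_infinite (by norm_num)).image hinj
  apply himg.mono
  rintro z ⟨t, _, rfl⟩
  simp [Set.mem_setOf_eq, Complex.norm_exp]

lemma rootMult_pow {p : Polynomial ℂ} (hp : p ≠ 0) (a : ℂ) (n : ℕ) :
    rootMultiplicity a (p ^ n) = n * rootMultiplicity a p := by
  induction n with
  | zero => simp [Polynomial.rootMultiplicity_eq_zero (by simp : ¬ IsRoot (1 : Polynomial ℂ) a)]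
  | succ k ih =>
    rw [pow_succ, Polynomial.rootMultiplicity_mul (mul_ne_zero (pow_ne_zero _ hp) hp), ih]
    ring

lemma rootMult_qstar {Q : Polynomial ℂ} (hQ : Q ≠ 0) {α : ℂ} (hα : ‖α‖ = 1) :
    rootMultiplicity α (qstar Q) = rootMultiplicity α Q := by
  have hα0 : α ≠ 0 := by intro h; rw [h] at hα; simp at hα
  set m := rootMultiplicity α Q with hm
  set R := Q /ₘ (X - C α) ^ m with hR
  have hfac : (X - C α) ^ m * R = Q := Polynomial.pow_mul_divByMonic_rootMultiplicity_eq Q α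
  have hRα : R.eval α ≠ 0 := Polynomial.eval_divByMonic_pow_rootMultiplicity_ne_zero α hQ
  have hR0 : R ≠ 0 := fun h => hRα (by rw [h]; simp)
  have hsplit : qstar Q = qstar ((X - C α) ^ m) * qstar R := by
    rw [← hfac, qstar_mul]
  have hpow : qstar ((X - C α) ^ m) = (C (-(starRingEnd ℂ) α) * (X - C α)) ^ m := by
    rw [qstar_pow, qstar_X_sub_C hα]
  have hCne : C (-(starRingEnd ℂ) α) * (X - C α) ≠ 0 := by
    apply mul_ne_zero
    · simp only [ne_eq, Polynomial.C_eq_zero, neg_eq_zero]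
      simpa using hα0
    · exact Polynomial.X_sub_C_ne_zero α
  have hmult1 : rootMultiplicity α (C (-(starRingEnd ℂ) α) * (X - C α)) = 1 := by
    rw [Polynomial.rootMultiplicity_mul (by exact hCne), Polynomial.rootMultiplicity_C]
    simp [Polynomial.rootMultiplicity_X_sub_C_self]
  have hqR : rootMultiplicity α (qstar R) = 0 := by
    apply Polynomial.rootMultiplicity_eq_zero
    intro h
    rw [Polynomial.IsRoot, eval_qstar R hα0] at h
    have hcc : (starRingEnd ℂ) α * α = 1 := by
      rw [mul_comm, Complex.mul_conj]
      norm_cast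
      rw [← Complex.sq_norm, hα]; norm_num
    have hconj : (starRingEnd ℂ) α⁻¹ = α := by
      rw [map_inv₀, eq_inv_of_mul_eq_one_left hcc, inv_inv]
    rw [hconj] at h
    rcases mul_eq_zero.mp h with h' | h'
    · exact pow_ne_zero _ hα0 h'
    · exact hRα (by simpa using h')
  have hne : qstar ((X - C α) ^ m) * qstar R ≠ 0 := by
    rw [← qstar_mul, hfac]; exact qstar_ne_zero hQ
  rw [hsplit, Polynomial.rootMultiplicity_mul hne, hpow, rootMult_pow hCne, hmult1, hqR]
  ring

theorem complementary_polynomial_unique_up_to_phase (P Q₁ Q₂ : Polynomial ℂ)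
    (h₁ : ∀ z : ℂ, ‖z‖ = 1 →
      ‖P.eval z‖ ^ 2 + ‖Q₁.eval z‖ ^ 2 = 1)
    (h₂ : ∀ z : ℂ, ‖z‖ = 1 →
      ‖P.eval z‖ ^ 2 + ‖Q₂.eval z‖ ^ 2 = 1)
    (hQ₁ : ∀ z : ℂ, ‖z‖ < 1 → Q₁.eval z ≠ 0)
    (hQ₂ : ∀ z : ℂ, ‖z‖ < 1 → Q₂.eval z ≠ 0)
    (hQ₁0 : Q₁ ≠ 0) (hQ₂0 : Q₂ ≠ 0) :
    ∃ lam : ℂ, ‖lam‖ = 1 ∧ Q₂ = Polynomial.C lam * Q₁ := by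
  classical
  have habs : ∀ z : ℂ, ‖z‖ = 1 →
      ‖Q₁.eval z‖ = ‖Q₂.eval z‖ := by
    intro z hz
    have e1 := h₁ z hz; have e2 := h₂ z hz
    have hsq : ‖Q₁.eval z‖ ^ 2 = ‖Q₂.eval z‖ ^ 2 := by linarith
    calc ‖Q₁.eval z‖ = Real.sqrt (‖Q₁.eval z‖ ^ 2) :=
          (Real.sqrt_sq (norm_nonneg _)).symm
      _ = Real.sqrt (‖Q₂.eval z‖ ^ 2) := by rw [hsq]
      _ = ‖Q₂.eval z‖ := Real.sqrt_sq (norm_nonneg _)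
  set n₁ := Q₁.natDegree with hn₁
  set n₂ := Q₂.natDegree with hn₂
  have esq : ∀ w : ℂ, w * (starRingEnd ℂ) w = ((‖w‖ ^ 2 : ℝ) : ℂ) := by
    intro w
    rw [Complex.mul_conj, Complex.sq_norm]
  have hAB : (X : Polynomial ℂ) ^ n₂ * (Q₁ * qstar Q₁)
      = (X : Polynomial ℂ) ^ n₁ * (Q₂ * qstar Q₂) := by
    apply Polynomial.eq_of_infinite_eval_eq
    apply circle_infinite.mono
    intro z hz
    simp only [Set.mem_setOf_eq] at hz ⊢
    have hz0 : z ≠ 0 := by intro h; rw [h] at hz; simp at hz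
    have key : ∀ Q : Polynomial ℂ,
        (qstar Q).eval z = z ^ Q.natDegree * (starRingEnd ℂ) (Q.eval z) := by
      intro Q
      rw [eval_qstar Q hz0, conj_inv_eq hz]
    simp only [Polynomial.eval_mul, Polynomial.eval_pow, Polynomial.eval_X]
    rw [key Q₁, key Q₂]
    have e1 := esq (Q₁.eval z)
    have e2 := esq (Q₂.eval z)
    rw [← habs z hz] at e2
    linear_combination (z ^ n₁ * z ^ n₂) * e1 - (z ^ n₁ * z ^ n₂) * e2
  have hAne : (X : Polynomial ℂ) ^ n₂ * (Q₁ * qstar Q₁) ≠ 0 :=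
    mul_ne_zero (pow_ne_zero _ Polynomial.X_ne_zero)
      (mul_ne_zero hQ₁0 (qstar_ne_zero hQ₁0))
  have hBne : (X : Polynomial ℂ) ^ n₁ * (Q₂ * qstar Q₂) ≠ 0 :=
    mul_ne_zero (pow_ne_zero _ Polynomial.X_ne_zero)
      (mul_ne_zero hQ₂0 (qstar_ne_zero hQ₂0))
  have hmult : ∀ α : ℂ, rootMultiplicity α Q₁ = rootMultiplicity α Q₂ := by
    intro α
    rcases lt_trichotomy (‖α‖) 1 with h | h | h
    · rw [Polynomial.rootMultiplicity_eq_zero (hQ₁ α h),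
        Polynomial.rootMultiplicity_eq_zero (hQ₂ α h)]
    · have hα0 : α ≠ 0 := by intro h0; rw [h0] at h; simp at h
      have hXn : ∀ n : ℕ, rootMultiplicity α ((X : Polynomial ℂ) ^ n) = 0 := fun n =>
        Polynomial.rootMultiplicity_eq_zero (by
          simp [Polynomial.IsRoot, hα0])
      have hA := congrArg (rootMultiplicity α) hAB
      rw [Polynomial.rootMultiplicity_mul hAne, Polynomial.rootMultiplicity_mul hBne,
        Polynomial.rootMultiplicity_mul (mul_ne_zero hQ₁0 (qstar_ne_zero hQ₁0)),
        Polynomial.rootMultiplicity_mul (mul_ne_zero hQ₂0 (qstar_ne_zero hQ₂0)),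
        hXn, hXn, rootMult_qstar hQ₁0 h, rootMult_qstar hQ₂0 h] at hA
      omega
    · have hα0 : α ≠ 0 := by intro h0; rw [h0] at h; simp at h; linarith
      have habs' : ‖(starRingEnd ℂ) α⁻¹‖ < 1 := by
        rw [map_inv₀, norm_inv, Complex.norm_conj]
        exact inv_lt_one_of_one_lt₀ h
      have hq : ∀ Q : Polynomial ℂ, (∀ z : ℂ, ‖z‖ < 1 → Q.eval z ≠ 0) →
          rootMultiplicity α (qstar Q) = 0 := by
        intro Q hQ
        apply Polynomial.rootMultiplicity_eq_zero
        intro hroot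
        rw [Polynomial.IsRoot, eval_qstar _ hα0] at hroot
        rcases mul_eq_zero.mp hroot with h' | h'
        · exact pow_ne_zero _ hα0 h'
        · exact hQ _ habs' (by simpa using h')
      have hA := congrArg (rootMultiplicity α) hAB
      have hXn : ∀ n : ℕ, rootMultiplicity α ((X : Polynomial ℂ) ^ n) = 0 := fun n =>
        Polynomial.rootMultiplicity_eq_zero (by simp [Polynomial.IsRoot, hα0])
      rw [Polynomial.rootMultiplicity_mul hAne, Polynomial.rootMultiplicity_mul hBne,
        Polynomial.rootMultiplicity_mul (mul_ne_zero hQ₁0 (qstar_ne_zero hQ₁0)),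
        Polynomial.rootMultiplicity_mul (mul_ne_zero hQ₂0 (qstar_ne_zero hQ₂0)),
        hXn, hXn, hq Q₁ hQ₁, hq Q₂ hQ₂] at hA
      omega
  have hroots : Q₂.roots = Q₁.roots :=
    Multiset.ext.mpr fun a => by
      rw [Polynomial.count_roots, Polynomial.count_roots, hmult a]
  have hs1 : Polynomial.C Q₁.leadingCoeff * (Q₁.roots.map fun a => X - C a).prod = Q₁ :=
    Polynomial.C_leadingCoeff_mul_prod_multiset_X_sub_C
      (Polynomial.splits_iff_card_roots.mp (IsAlgClosed.splits Q₁))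
  have hs2 : Polynomial.C Q₂.leadingCoeff * (Q₂.roots.map fun a => X - C a).prod = Q₂ :=
    Polynomial.C_leadingCoeff_mul_prod_multiset_X_sub_C
      (Polynomial.splits_iff_card_roots.mp (IsAlgClosed.splits Q₂))
  have hl1 : Q₁.leadingCoeff ≠ 0 := Polynomial.leadingCoeff_ne_zero.mpr hQ₁0
  set lam := Q₂.leadingCoeff / Q₁.leadingCoeff with hlam
  have hQ2eq : Q₂ = Polynomial.C lam * Q₁ := by
    calc Q₂ = Polynomial.C Q₂.leadingCoeff * (Q₁.roots.map fun a => X - C a).prod := by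
          rw [← hroots, hs2]
      _ = Polynomial.C lam * (Polynomial.C Q₁.leadingCoeff *
            (Q₁.roots.map fun a => X - C a).prod) := by
          rw [← mul_assoc, ← Polynomial.C_mul, hlam, div_mul_cancel₀ _ hl1]
      _ = Polynomial.C lam * Q₁ := by rw [hs1]
  refine ⟨lam, ?_, hQ2eq⟩
  obtain ⟨z, hzmem⟩ := (circle_infinite.diff Q₁.roots.toFinset.finite_toSet).nonempty
  have hz1 : ‖z‖ = 1 := hzmem.1
  have hz2 : Q₁.eval z ≠ 0 := by
    intro h0
    exact hzmem.2 (by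
      simp only [Finset.coe_sort_coe, Multiset.mem_toFinset, Finset.mem_coe]
      exact (Polynomial.mem_roots hQ₁0).mpr h0)
  have h12 := habs z hz1
  rw [hQ2eq] at h12
  simp only [Polynomial.eval_mul, Polynomial.eval_C, norm_mul] at h12
  have hzabs : ‖Q₁.eval z‖ ≠ 0 := by
    simpa using hz2
  field_simp at h12
  exact h12.symm
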